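/- Let A be a 2×2 matrix of linear forms over R = K[x_0,…,x_r] with a_{11}, a_{21} linearly independent, and suppose det(A) = u·v where u = α·a_{11} + β·a_{21} for some α, β ∈ K and v is a linear form. Then there exists γ ∈ K such that a_{22} = α·v + γ·a_{21} and a_{12} = -β·v + γ·a_{11}; in particular, after the column operation C_2 - γ·C_1, the entries of the second column of A are scalar multiples of two fixed linear forms lying in span{v}. -/

import Mathlib

open MvPolynomial

namespace TwoByTwoAux

lemma exists_single_of_degree_one {σ : Type*} (d : σ →₀ ℕ) (h : d.degree = 1) :
    ∃ j, d = Finsupp.single j 1 := by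
  classical
  have hne : d.support.Nonempty := by
    by_contra hs
    rw [Finset.not_nonempty_iff_eq_empty, Finsupp.support_eq_empty] at hs
    simp [hs] at h
  obtain ⟨j, hj⟩ := hne
  have hsum : d j + ∑ i ∈ d.support.erase j, d i = 1 := by
    rw [Finset.add_sum_erase _ _ hj]; exact h
  have hj1 : d j ≠ 0 := Finsupp.mem_support_iff.mp hj
  have hrest : ∑ i ∈ d.support.erase j, d i = 0 := by omega
  refine ⟨j, ?_⟩
  ext i
  rcases eq_or_ne i j with rfl | hij
  · simp; omega
  · rw [Finsupp.single_apply, if_neg (Ne.symm hij)]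
    by_contra hi0
    have hi : i ∈ d.support.erase j := Finset.mem_erase.mpr ⟨hij, Finsupp.mem_support_iff.mpr hi0⟩
    have := Finset.sum_eq_zero_iff.mp hrest i hi
    exact hi0 this

variable {K : Type*} [Field K]

lemma linear_eq_sum {n : ℕ} (f : MvPolynomial (Fin n) K) (hf : f.IsHomogeneous 1) :
    f = ∑ j, C (coeff (Finsupp.single j 1) f) * X j := by
  ext d
  rw [coeff_sum]
  by_cases hd : d.degree = 1
  · obtain ⟨j, rfl⟩ := exists_single_of_degree_one d hd
    rw [Finset.sum_eq_single j]
    · simp [coeff_C_mul, coeff_X']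
    · intro b _ hbj
      simp [coeff_C_mul, coeff_X', Finsupp.single_left_inj (one_ne_zero), hbj]
    · simp
  · rw [hf.coeff_eq_zero hd]
    symm
    apply Finset.sum_eq_zero
    intro j _
    rw [coeff_C_mul, coeff_X']
    rw [if_neg, mul_zero]
    intro hs
    apply hd
    rw [← hs]
    simp [Finsupp.degree_single]

lemma prime_X_fin {n : ℕ} (i : Fin (n + 1)) : Prime (X i : MvPolynomial (Fin (n + 1)) K) := by
  have h0 : Prime (X 0 : MvPolynomial (Fin (n + 1)) K) := by
    rw [← MulEquiv.prime_iff (finSuccEquiv K n).toMulEquiv]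
    simpa [finSuccEquiv_X_zero] using (Polynomial.prime_X (R := MvPolynomial (Fin n) K))
  rw [← MulEquiv.prime_iff (renameEquiv K (Equiv.swap i 0)).toMulEquiv]
  simpa [Equiv.swap_apply_left] using h0

lemma prime_of_homogeneous_one {n : ℕ} (f : MvPolynomial (Fin (n + 1)) K)
    (hf : f.IsHomogeneous 1) (h0 : f ≠ 0) : Prime f := by
  classical
  obtain ⟨i, hc⟩ : ∃ i, coeff (Finsupp.single i 1) f ≠ 0 := by
    by_contra h
    push_neg at h
    apply h0
    rw [linear_eq_sum f hf]
    simp [h]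
  set c := coeff (Finsupp.single i 1) f with hcdef
  set g : MvPolynomial (Fin (n + 1)) K :=
    ∑ j ∈ Finset.univ.erase i, C (coeff (Finsupp.single j 1) f) * X j with hgdef
  have hfg : f = C c * X i + g := by
    conv_lhs => rw [linear_eq_sum f hf]
    rw [hgdef, ← Finset.add_sum_erase _ _ (Finset.mem_univ i)]
  set t : Fin (n + 1) → MvPolynomial (Fin (n + 1)) K :=
    fun j => if j = i then f else X j with htdef
  set s : Fin (n + 1) → MvPolynomial (Fin (n + 1)) K :=
    fun j => if j = i then C c⁻¹ * (X i - g) else X j with hsdef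
  have hgt : aeval t g = g := by
    rw [hgdef, map_sum]
    apply Finset.sum_congr rfl
    intro j hj
    have hji : j ≠ i := (Finset.mem_erase.mp hj).1
    simp [htdef, hji, algebraMap_eq]
  have hgs : aeval s g = g := by
    rw [hgdef, map_sum]
    apply Finset.sum_congr rfl
    intro j hj
    have hji : j ≠ i := (Finset.mem_erase.mp hj).1
    simp [hsdef, hji, algebraMap_eq]
  have hFG : (aeval t).comp (aeval s) = AlgHom.id K (MvPolynomial (Fin (n + 1)) K) := by
    apply MvPolynomial.algHom_ext
    intro j
    rcases eq_or_ne j i with rfl | hji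
    · simp only [AlgHom.comp_apply, aeval_X, AlgHom.id_apply, hsdef, eq_self_iff_true, if_true]
      rw [map_mul, map_sub, aeval_X, hgt]
      simp only [htdef, eq_self_iff_true, if_true, algebraMap_eq, aeval_C]
      rw [hfg]
      rw [add_sub_cancel_right, ← mul_assoc, ← C_mul, inv_mul_cancel₀ hc, C_1, one_mul]
    · simp [hsdef, htdef, hji]
  have hGF : (aeval s).comp (aeval t) = AlgHom.id K (MvPolynomial (Fin (n + 1)) K) := by
    apply MvPolynomial.algHom_ext
    intro j
    rcases eq_or_ne j i with rfl | hji
    · simp only [AlgHom.comp_apply, aeval_X, AlgHom.id_apply, htdef, eq_self_iff_true, if_true]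
      rw [hfg, map_add, map_mul, aeval_X, hgs]
      simp only [hsdef, eq_self_iff_true, if_true, algebraMap_eq, aeval_C]
      rw [← mul_assoc, ← C_mul, mul_inv_cancel₀ hc, C_1, one_mul, sub_add_cancel]
    · simp [hsdef, htdef, hji]
  let e : MvPolynomial (Fin (n + 1)) K ≃ₐ[K] MvPolynomial (Fin (n + 1)) K :=
    AlgEquiv.ofAlgHom (aeval t) (aeval s) hFG hGF
  have hef : e (X i) = f := by
    show aeval t (X i) = f
    simp [htdef]
  rw [← hef]
  exact (MulEquiv.prime_iff e.toMulEquiv).mpr (prime_X_fin i)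

lemma homogeneousComponent_mul_linear {n : ℕ} (c a : MvPolynomial (Fin n) K)
    (ha : a.IsHomogeneous 1) (k : ℕ) :
    homogeneousComponent (k + 1) (c * a) = homogeneousComponent k c * a := by
  classical
  conv_lhs => rw [← sum_homogeneousComponent c]
  rw [Finset.sum_mul, map_sum]
  have hterm : ∀ i ∈ Finset.range (c.totalDegree + 1),
      homogeneousComponent (k + 1) (homogeneousComponent i c * a) =
        if k + 1 = i + 1 then homogeneousComponent i c * a else 0 := by
    intro i _
    exact homogeneousComponent_of_mem ((homogeneousComponent_isHomogeneous i c).mul ha)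
  rw [Finset.sum_congr rfl hterm]
  simp only [add_left_inj]
  rw [Finset.sum_ite_eq]
  by_cases hk : k ∈ Finset.range (c.totalDegree + 1)
  · rw [if_pos hk]
  · rw [Finset.mem_range] at hk
    rw [if_neg (by rwa [Finset.mem_range])]
    rw [homogeneousComponent_eq_zero (h := show c.totalDegree < k by omega), zero_mul]

lemma eq_C_of_linear_eq_mul {n : ℕ} {q c a : MvPolynomial (Fin n) K}
    (ha : a.IsHomogeneous 1) (hq : q.IsHomogeneous 1) (h : q = c * a) (ha0 : a ≠ 0) :
    c = C (coeff 0 c) := by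
  have hcomp : ∀ k, 1 ≤ k → homogeneousComponent k c = 0 := by
    intro k hk
    have h1 : homogeneousComponent (k + 1) q = homogeneousComponent k c * a := by
      rw [h]; exact homogeneousComponent_mul_linear c a ha k
    have h2 : homogeneousComponent (k + 1) q = 0 := by
      rw [homogeneousComponent_of_mem ((mem_homogeneousSubmodule 1 q).mpr hq),
        if_neg (by omega)]
    rcases mul_eq_zero.mp (h1 ▸ h2) with h3 | h3
    · exact h3
    · exact absurd h3 ha0
  conv_lhs => rw [← sum_homogeneousComponent c]
  rw [Finset.sum_eq_single_of_mem 0 (Finset.mem_range.mpr (Nat.succ_pos _))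
    (fun i _ hi => hcomp i (by omega))]
  exact homogeneousComponent_zero c

end TwoByTwoAux

/-- Lemma on `2 × 2` matrices of linear forms (case `u ∈ span{a₁₁, a₂₁}`):
if `det A = u·v` with `u = α·a₁₁ + β·a₂₁`, then there is `γ ∈ K` with
`a₂₂ = α·v + γ·a₂₁` and `a₁₂ = -β·v + γ·a₁₁`. -/
theorem two_by_two_det_factors_u_in_span
    {K : Type*} [Field K] {r : ℕ}
    (a11 a12 a21 a22 u v : MvPolynomial (Fin (r + 1)) K)
    (h11 : a11.IsHomogeneous 1) (h12 : a12.IsHomogeneous 1)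
    (h21 : a21.IsHomogeneous 1) (h22 : a22.IsHomogeneous 1)
    (hu : u.IsHomogeneous 1) (hv : v.IsHomogeneous 1)
    (hind : ∀ c d : K, c • a11 + d • a21 = 0 → c = 0 ∧ d = 0)
    (α β : K) (huspan : u = C α * a11 + C β * a21)
    (hdet : a11 * a22 - a21 * a12 = u * v) :
    ∃ γ : K, a22 = C α * v + C γ * a21 ∧ a12 = -(C β * v) + C γ * a11 := by
  have h110 : a11 ≠ 0 := by
    intro h
    simpa using (hind 1 0 (by simp [h])).1
  rw [huspan] at hdet
  have key : a11 * (a22 - C α * v) = a21 * (a12 + C β * v) := by linear_combination hdet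
  have hprime := TwoByTwoAux.prime_of_homogeneous_one a11 h11 h110
  have hq : (a12 + C β * v).IsHomogeneous 1 := h12.add (hv.C_mul β)
  have hdvd : a11 ∣ a12 + C β * v := by
    have hd : a11 ∣ a21 * (a12 + C β * v) := ⟨_, key.symm⟩
    rcases hprime.2.2 _ _ hd with h | h
    · exfalso
      obtain ⟨c, hc⟩ := h
      have hcC := TwoByTwoAux.eq_C_of_linear_eq_mul h11 h21 (by rw [hc, mul_comm]) h110
      have h3 : a21 = a11 * C (coeff 0 c) := by rw [hc, ← hcC]
      have h2 := hind (coeff 0 c) (-1) (by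
        rw [smul_eq_C_mul, smul_eq_C_mul, h3, map_neg, map_one]
        ring)
      exact absurd h2.2 (by norm_num)
    · exact h
  obtain ⟨c, hc⟩ := hdvd
  have hcC := TwoByTwoAux.eq_C_of_linear_eq_mul h11 hq (by rw [hc, mul_comm]) h110
  refine ⟨coeff 0 c, ?_, ?_⟩
  · have h1 : a11 * (a22 - C α * v) = a11 * (C (coeff 0 c) * a21) := by
      rw [key, hc]; nth_rewrite 1 [hcC]; ring
    have h2 := mul_left_cancel₀ h110 h1
    linear_combination h2
  · have h1 : a12 + C β * v = C (coeff 0 c) * a11 := by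
      rw [hc]; nth_rewrite 1 [hcC]; ring
    linear_combination h1
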